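/- Let H be a finite intersecting r-partite r-uniform hypergraph with parts V_1, …, V_r, meaning every edge of H contains exactly one vertex from each part and every two edges of H have nonempty intersection. Let G_H be the complete graph on vertex set E(H), and color each pair {e, f} of distinct edges of H by the smallest index i ∈ {1, …, r} such that e ∩ f ∩ V_i ≠ ∅. If the vertex set of G_H can be covered by k monochromatic connected components of this r-edge-coloring, then H has a vertex cover of size at most k (a set S of vertices of H such that every edge of H meets S). -/
import Mathlib


/-- From a covering of the colored complete graph G_H on the edge set of an
intersecting r-partite r-uniform hypergraph H by k monochromatic components,
one obtains a vertex cover of H of size at most k. Here p assigns each vertex its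
part, E is the edge set (each edge a transversal, i.e. one vertex per part),
and col e f is the least index i with e and f meeting in part V_i. -/
theorem intersecting_cover_from_components (r : ℕ) (V : Type*)
    (p : V → Fin r) (E : Finset (Fin r → V))
    (hE : ∀ e ∈ E, ∀ i, p (e i) = i)
    (hint : ∀ e ∈ E, ∀ f ∈ E, ∃ i, e i = f i)
    (col : (Fin r → V) → (Fin r → V) → Fin r)
    (hcol : ∀ e ∈ E, ∀ f ∈ E, e ≠ f →
      e (col e f) = f (col e f) ∧ ∀ i, i < col e f → e i ≠ f i)
    (k : ℕ) (T : Finset (Fin r × {e // e ∈ E})) (hTcard : T.card ≤ k)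
    (hTcover : ∀ a : {e // e ∈ E}, ∃ q ∈ T,
      Relation.ReflTransGen
        (fun x y : {e // e ∈ E} => x ≠ y ∧ col x.1 y.1 = q.1) a q.2) :
    ∃ S : Finset V, S.card ≤ k ∧ ∀ e ∈ E, ∃ s ∈ S, ∃ i, e i = s := by
  classical
  refine ⟨T.image (fun q => q.2.1 q.1), le_trans Finset.card_image_le hTcard, ?_⟩
  intro e he
  obtain ⟨q, hq, hrel⟩ := hTcover ⟨e, he⟩
  have key : ∀ x : {e // e ∈ E},
      Relation.ReflTransGen
        (fun x y : {e // e ∈ E} => x ≠ y ∧ col x.1 y.1 = q.1) x q.2 →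
      x.1 q.1 = q.2.1 q.1 := by
    intro x hrel
    induction hrel using Relation.ReflTransGen.head_induction_on with
    | refl => rfl
    | head h _ ih =>
      rename_i x y _
      have hxy := (hcol x.1 x.2 y.1 y.2 (fun hh => h.1 (Subtype.ext hh))).1
      rw [h.2] at hxy
      exact hxy.trans ih
  exact ⟨q.2.1 q.1, Finset.mem_image_of_mem _ hq, q.1, key _ hrel⟩
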